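/- Let $X$ be a finite dimensional real CL-space with an absolute norm, let $G = G(X)$ be its associated graph on vertex set $\{1,\dots,n\}$ with edges $\{(i,j) : \|e_i + e_j\| > 1\}$, and let $\tau$ be a maximal clique of $G$. Then the subspace $\mathrm{span}\{e_j : j \in \tau\}$ of $X$ is isometrically isomorphic to $\ell_1^{|\tau|}$, i.e., $\|\sum_{j\in\tau} a_j e_j\| = \sum_{j\in\tau}|a_j|$ for all scalars $a_j$. -/

import Mathlib

open Finset

def flipAt {n : ℕ} (k : Fin n) (x : Fin n → ℝ) : Fin n → ℝ :=
  fun m => if m = k then -x m else x m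

lemma flipAt_flipAt {n : ℕ} (k : Fin n) (x : Fin n → ℝ) :
    flipAt k (flipAt k x) = x := by
  funext m; simp only [flipAt]; split <;> simp

lemma abs_flipAt {n : ℕ} (k : Fin n) (x : Fin n → ℝ) (m : Fin n) :
    |flipAt k x m| = |x m| := by
  simp only [flipAt]; split <;> simp

lemma pair_flipAt {n : ℕ} (k : Fin n) (f x : Fin n → ℝ) :
    ∑ j, f j * flipAt k x j = ∑ j, flipAt k f j * x j := by
  refine Finset.sum_congr rfl fun j _ => ?_
  simp only [flipAt]; split <;> ring

lemma sum_flipAt {n : ℕ} (k : Fin n) (f v : Fin n → ℝ) :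
    ∑ j, flipAt k f j * v j = (∑ j, f j * v j) - 2 * (f k * v k) := by
  have : ∀ j, flipAt k f j * v j
      = f j * v j - (if j = k then 2 * (f j * v j) else 0) := by
    intro j; simp only [flipAt]; split <;> ring
  rw [Finset.sum_congr rfl fun j _ => this j, Finset.sum_sub_distrib,
    Finset.sum_ite_eq' Finset.univ k (fun j => 2 * (f j * v j)) ]
  simp

lemma flipAt_comb {n : ℕ} (k : Fin n) (a b : ℝ) (x y : Fin n → ℝ) :
    flipAt k (a • x + b • y) = a • flipAt k x + b • flipAt k y := by
  funext m
  simp only [flipAt, Pi.add_apply, Pi.smul_apply, smul_eq_mul]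
  split <;> ring

lemma flipAt_extreme {n : ℕ} (k : Fin n) {S : Set (Fin n → ℝ)}
    (hS : ∀ x ∈ S, flipAt k x ∈ S) {v : Fin n → ℝ}
    (hv : v ∈ Set.extremePoints ℝ S) : flipAt k v ∈ Set.extremePoints ℝ S := by
  obtain ⟨hvS, hext⟩ := hv
  refine ⟨hS v hvS, ?_⟩
  intro x₁ hx₁ x₂ hx₂ hmem
  obtain ⟨a, b, ha, hb, hab, hsum⟩ := hmem
  have hsum' : a • flipAt k x₁ + b • flipAt k x₂ = v := by
    rw [← flipAt_comb, hsum, flipAt_flipAt]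
  have h12 := hext (hS x₁ hx₁) (hS x₂ hx₂) ⟨a, b, ha, hb, hab, hsum'⟩
  rw [← h12, flipAt_flipAt]

lemma km_sublevel {n : ℕ} {S : Set (Fin n → ℝ)} (hc : IsCompact S)
    (hcv : Convex ℝ S) {g : (Fin n → ℝ) → ℝ} (hgc : Continuous g)
    (hgcv : ∀ (x y : Fin n → ℝ) (a b : ℝ), 0 ≤ a → 0 ≤ b → a + b = 1 →
      g (a • x + b • y) ≤ a * g x + b * g y)
    (hext : ∀ v ∈ Set.extremePoints ℝ S, g v ≤ 1) :
    ∀ w ∈ S, g w ≤ 1 := by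
  have hP : Convex ℝ {x : Fin n → ℝ | g x ≤ 1} := by
    intro x hx y hy a b ha hb hab
    have := hgcv x y a b ha hb hab
    have hx1 : a * g x ≤ a * 1 := mul_le_mul_of_nonneg_left hx ha
    have hy1 : b * g y ≤ b * 1 := mul_le_mul_of_nonneg_left hy hb
    simp only [Set.mem_setOf_eq] at *
    nlinarith
  have hPc : IsClosed {x : Fin n → ℝ | g x ≤ 1} :=
    isClosed_le hgc continuous_const
  have hsub : S ⊆ {x : Fin n → ℝ | g x ≤ 1} := by
    rw [← closure_convexHull_extremePoints hc hcv]
    exact closure_minimal (convexHull_min hext hP) hPc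
  exact fun w hw => hsub hw

/-- in a finite dimensional real CL-space with an absolute norm,
the span of the coordinate vectors indexed by a maximal clique of the
associated graph is isometric to `ℓ₁`: the norm restricted there is the
`ℓ₁`-norm. -/
theorem stmt_9 (n : ℕ) (N : (Fin n → ℝ) → ℝ)
    (hadd : ∀ x y : Fin n → ℝ, N (x + y) ≤ N x + N y)
    (hsmul : ∀ (c : ℝ) (x : Fin n → ℝ), N (c • x) = |c| * N x)
    (habs : ∀ x : Fin n → ℝ, N x = N (fun j => |x j|))
    (hunit : ∀ j : Fin n, N ((Pi.single j 1 : Fin n → ℝ)) = 1)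
    (hdef : ∀ x : Fin n → ℝ, N x = 0 → x = 0)
    -- the dual norm
    (Nd : (Fin n → ℝ) → ℝ)
    (hNd : ∀ f : Fin n → ℝ,
      Nd f = sSup {r : ℝ | ∃ x : Fin n → ℝ, N x ≤ 1 ∧ r = |∑ j, f j * x j|})
    -- `X` is a CL-space
    (hCL : ∀ f ∈ Set.extremePoints ℝ {g : Fin n → ℝ | Nd g ≤ 1},
      ∀ x ∈ Set.extremePoints ℝ {x : Fin n → ℝ | N x ≤ 1}, |∑ j, f j * x j| = 1)
    -- `τ` is a maximal clique of the graph `G(X)`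
    (τ : Finset (Fin n))
    (hclique : ∀ i ∈ τ, ∀ j ∈ τ, i ≠ j →
      1 < N ((Pi.single i 1 : Fin n → ℝ) + (Pi.single j 1 : Fin n → ℝ)))
    (hmax : ∀ τ' : Finset (Fin n), τ ⊆ τ' →
      (∀ i ∈ τ', ∀ j ∈ τ', i ≠ j →
        1 < N ((Pi.single i 1 : Fin n → ℝ) + (Pi.single j 1 : Fin n → ℝ))) → τ' = τ) :
    ∀ a : Fin n → ℝ, N (fun i => if i ∈ τ then a i else 0) = ∑ j ∈ τ, |a j| := by
  -- basic facts about N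
  have h0 : N 0 = 0 := by
    have := hsmul 0 0; simpa using this
  have hneg : ∀ x, N (-x) = N x := by
    intro x; have := hsmul (-1) x; simpa using this
  have hnonneg : ∀ x, 0 ≤ N x := by
    intro x
    have h1 := hadd x (-x)
    rw [add_neg_cancel, h0, hneg] at h1
    linarith
  have hflipN : ∀ k x, N (flipAt k x) = N x := by
    intro k x
    rw [habs (flipAt k x), habs x]
    congr 1
    funext m
    exact abs_flipAt k x m
  have hsingle : ∀ (j : Fin n) (c : ℝ), N (Pi.single j c) = |c| := by
    intro j c
    have : (Pi.single j c : Fin n → ℝ) = c • (Pi.single j 1 : Fin n → ℝ) := by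
      funext m
      by_cases h : m = j <;> simp [Pi.single_apply, h]
    rw [this, hsmul, hunit, mul_one]
  have hcoord : ∀ (x : Fin n → ℝ) j, |x j| ≤ N x := by
    intro x j
    have hdiff : x - flipAt j x = Pi.single j (2 * x j) := by
      funext m
      by_cases h : m = j <;> simp [flipAt, Pi.single_apply, h] <;> ring
    have h1 : N (x - flipAt j x) ≤ N x + N (flipAt j x) := by
      have := hadd x (-(flipAt j x))
      rw [hneg] at this
      simpa [sub_eq_add_neg] using this
    rw [hdiff, hsingle, hflipN] at h1
    rw [abs_mul] at h1
    simp only [abs_two] at h1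
    linarith [abs_nonneg (x j)]
  have hsum : ∀ (s : Finset (Fin n)) (g : Fin n → (Fin n → ℝ)),
      N (∑ j ∈ s, g j) ≤ ∑ j ∈ s, N (g j) := by
    intro s g
    induction s using Finset.cons_induction with
    | empty => simpa using le_of_eq h0
    | cons j s hj ih =>
      rw [Finset.sum_cons, Finset.sum_cons]
      exact (hadd _ _).trans (by linarith)
  have hl1 : ∀ x : Fin n → ℝ, N x ≤ ∑ j, |x j| := by
    intro x
    have hx : x = ∑ j, Pi.single j (x j) := by
      funext m
      rw [Finset.sum_apply]
      simp [Pi.single_apply]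
    calc N x = N (∑ j, Pi.single j (x j)) := by rw [← hx]
      _ ≤ ∑ j, N (Pi.single j (x j)) := hsum _ _
      _ = ∑ j, |x j| := by simp [hsingle]
  have hcont : Continuous N := by
    have : LipschitzWith n N := by
      apply LipschitzWith.of_dist_le_mul
      intro x y
      have h1 : |N x - N y| ≤ N (x - y) := by
        rw [abs_sub_le_iff]
        constructor
        · have := hadd y (x - y); simp at this; linarith
        · have h := hadd x (y - x)
          simp at h
          have h' : N (y - x) = N (x - y) := by rw [← neg_sub, hneg]
          linarith
      have h2 : N (x - y) ≤ ∑ j, |x j - y j| := hl1 _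
      have h3 : ∀ j, |x j - y j| ≤ dist x y := by
        intro j
        have := dist_le_pi_dist x y j
        rwa [Real.dist_eq] at this
      have h4 : ∑ j, |x j - y j| ≤ ∑ _j : Fin n, dist x y :=
        Finset.sum_le_sum fun j _ => h3 j
      rw [Real.dist_eq]
      simp only [Finset.sum_const, Finset.card_univ, Fintype.card_fin,
        nsmul_eq_mul] at h4
      calc dist (N x) (N y) = |N x - N y| := Real.dist_eq _ _
        _ ≤ N (x - y) := h1
        _ ≤ ∑ j, |x j - y j| := h2
        _ ≤ n * dist x y := h4
    exact this.continuous
  -- the unit ball B and its properties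
  set B : Set (Fin n → ℝ) := {x | N x ≤ 1} with hBdef
  have hB0 : (0 : Fin n → ℝ) ∈ B := by simp [hBdef, h0]
  have hBe : ∀ j, (Pi.single j 1 : Fin n → ℝ) ∈ B := by
    intro j; simp [hBdef, hunit j]
  have hBneg : ∀ x ∈ B, -x ∈ B := by
    intro x hx; simpa [hBdef, hneg] using hx
  have hBconv : Convex ℝ B := by
    intro x hx y hy a b ha hb hab
    simp only [hBdef, Set.mem_setOf_eq] at *
    calc N (a • x + b • y) ≤ N (a • x) + N (b • y) := hadd _ _
      _ = |a| * N x + |b| * N y := by rw [hsmul, hsmul]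
      _ ≤ |a| * 1 + |b| * 1 := by
          gcongr <;> first
            | exact abs_nonneg _
            | assumption
      _ = 1 := by rw [abs_of_nonneg ha, abs_of_nonneg hb]; linarith
  have hBclosed : IsClosed B := isClosed_le hcont continuous_const
  have hBcomp : IsCompact B := by
    refine Metric.isCompact_of_isClosed_isBounded hBclosed ?_
    refine (Metric.isBounded_closedBall (x := (0 : Fin n → ℝ)) (r := 1)).subset ?_
    intro x hx
    simp only [Metric.mem_closedBall, dist_zero_right]
    rw [pi_norm_le_iff_of_nonneg zero_le_one]
    intro j
    rw [Real.norm_eq_abs]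
    exact (hcoord x j).trans hx
  have hBflip : ∀ k, ∀ x ∈ B, flipAt k x ∈ B := by
    intro k x hx; simpa [hBdef, hflipN] using hx
  -- the dual ball D and its properties
  set D : Set (Fin n → ℝ) := {f | ∀ x, N x ≤ 1 → |∑ j, f j * x j| ≤ 1} with hDdef
  have hpair_single : ∀ (f : Fin n → ℝ) (k : Fin n),
      ∑ j, f j * (Pi.single k 1 : Fin n → ℝ) j = f k := by
    intro f k
    rw [Finset.sum_eq_single k]
    · simp
    · intro j _ hjk; simp [Pi.single_apply, hjk]
    · intro h; exact absurd (Finset.mem_univ k) h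
  have hDeq : {g : Fin n → ℝ | Nd g ≤ 1} = D := by
    ext g
    simp only [hDdef, Set.mem_setOf_eq]
    rw [hNd g]
    constructor
    · intro h x hx
      have hmem : |∑ j, g j * x j| ∈
          {r : ℝ | ∃ x : Fin n → ℝ, N x ≤ 1 ∧ r = |∑ j, g j * x j|} := ⟨x, hx, rfl⟩
      have hbdd : BddAbove {r : ℝ | ∃ x : Fin n → ℝ, N x ≤ 1 ∧ r = |∑ j, g j * x j|} := by
        refine ⟨∑ j, |g j|, ?_⟩
        rintro r ⟨y, hy, rfl⟩
        calc |∑ j, g j * y j| ≤ ∑ j, |g j * y j| := Finset.abs_sum_le_sum_abs _ _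
          _ = ∑ j, |g j| * |y j| := by simp [abs_mul]
          _ ≤ ∑ j, |g j| * 1 := by
              refine Finset.sum_le_sum fun j _ => ?_
              exact mul_le_mul_of_nonneg_left ((hcoord y j).trans hy) (abs_nonneg _)
          _ = ∑ j, |g j| := by simp
      exact (le_csSup hbdd hmem).trans h
    · intro h
      refine Real.sSup_le ?_ zero_le_one
      rintro r ⟨y, hy, rfl⟩
      exact h y hy
  have hDcoord : ∀ f ∈ D, ∀ k, |f k| ≤ 1 := by
    intro f hf k
    have := hf (Pi.single k 1) (le_of_eq (hunit k))
    rwa [hpair_single] at this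
  have hDconv : Convex ℝ D := by
    intro f hf g hg a b ha hb hab
    intro x hx
    have hsum' : ∑ j, (a • f + b • g) j * x j
        = a * (∑ j, f j * x j) + b * (∑ j, g j * x j) := by
      rw [Finset.mul_sum, Finset.mul_sum, ← Finset.sum_add_distrib]
      refine Finset.sum_congr rfl fun j _ => ?_
      simp [Pi.add_apply, Pi.smul_apply]; ring
    rw [hsum']
    calc |a * (∑ j, f j * x j) + b * (∑ j, g j * x j)|
        ≤ |a * (∑ j, f j * x j)| + |b * (∑ j, g j * x j)| := abs_add_le _ _
      _ = a * |∑ j, f j * x j| + b * |∑ j, g j * x j| := by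
          rw [abs_mul, abs_mul, abs_of_nonneg ha, abs_of_nonneg hb]
      _ ≤ a * 1 + b * 1 := by
          gcongr <;> first
            | assumption
            | exact hf x hx
            | exact hg x hx
      _ = 1 := by linarith
  have hDclosed : IsClosed D := by
    have : D = ⋂ (x : Fin n → ℝ) (_ : N x ≤ 1), {f : Fin n → ℝ | |∑ j, f j * x j| ≤ 1} := by
      ext f; simp [hDdef, Set.mem_iInter]
    rw [this]
    refine isClosed_iInter fun x => isClosed_iInter fun _ => ?_
    refine isClosed_le ?_ continuous_const
    exact (continuous_finset_sum _ fun j _ => (continuous_apply j).mul continuous_const).abs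
  have hDcomp : IsCompact D := by
    refine Metric.isCompact_of_isClosed_isBounded hDclosed ?_
    refine (Metric.isBounded_closedBall (x := (0 : Fin n → ℝ)) (r := 1)).subset ?_
    intro f hf
    simp only [Metric.mem_closedBall, dist_zero_right]
    rw [pi_norm_le_iff_of_nonneg zero_le_one]
    intro j
    rw [Real.norm_eq_abs]
    exact hDcoord f hf j
  have hDflip : ∀ k, ∀ f ∈ D, flipAt k f ∈ D := by
    intro k f hf x hx
    rw [← pair_flipAt]
    exact hf (flipAt k x) (by rwa [hflipN])
  rw [hDeq] at hCL
  -- concentration: an extreme pair couples through at most one coordinate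
  have hconc : ∀ f ∈ Set.extremePoints ℝ D, ∀ v ∈ Set.extremePoints ℝ B,
      ∀ i j : Fin n, i ≠ j → f i * v i ≠ 0 → f j * v j ≠ 0 → False := by
    intro f hf v hv i j hij hti htj
    have hs : |∑ k, f k * v k| = 1 := hCL f hf v hv
    have hflip1 : ∀ k : Fin n, |(∑ m, f m * v m) - 2 * (f k * v k)| = 1 := by
      intro k
      have hk := hCL (flipAt k f) (flipAt_extreme k (hDflip k) hf) v hv
      rwa [sum_flipAt] at hk
    have hti' : f i * v i = ∑ k, f k * v k := by
      rcases (abs_eq zero_le_one).mp hs with h | h <;>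
        rcases (abs_eq zero_le_one).mp (hflip1 i) with h' | h' <;>
          first
            | (exfalso; apply hti; linarith)
            | linarith
    have htj' : f j * v j = ∑ k, f k * v k := by
      rcases (abs_eq zero_le_one).mp hs with h | h <;>
        rcases (abs_eq zero_le_one).mp (hflip1 j) with h' | h' <;>
          first
            | (exfalso; apply htj; linarith)
            | linarith
    have hjj : flipAt i (flipAt j f) ∈ Set.extremePoints ℝ D :=
      flipAt_extreme i (hDflip i) (flipAt_extreme j (hDflip j) hf)
    have h3 := hCL _ hjj v hv
    rw [sum_flipAt, sum_flipAt] at h3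
    have hfi : flipAt j f i = f i := by simp [flipAt, hij]
    rw [hfi, hti', htj'] at h3
    rw [show (∑ k, f k * v k) - 2 * (∑ k, f k * v k) - 2 * (∑ k, f k * v k)
        = (-3) * (∑ k, f k * v k) from by ring, abs_mul, hs] at h3
    norm_num at h3
  -- from adjacency, produce an extreme dual functional large on both coordinates
  have hsingle_smul : ∀ (k : Fin n) (c : ℝ),
      (Pi.single k c : Fin n → ℝ) = c • (Pi.single k 1 : Fin n → ℝ) := by
    intro k c
    funext m
    by_cases h : m = k <;> simp [Pi.single_apply, h]
  have hadj : ∀ i j : Fin n, i ≠ j →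
      1 < N ((Pi.single i 1 : Fin n → ℝ) + (Pi.single j 1 : Fin n → ℝ)) →
      ∃ e ∈ Set.extremePoints ℝ D, 1 < e i + e j := by
    intro i j hij hN
    set x' : Fin n → ℝ := (Pi.single i 1 : Fin n → ℝ) + (Pi.single j 1 : Fin n → ℝ)
      with hx'def
    have hx'B : x' ∉ B := by
      simp only [hBdef, Set.mem_setOf_eq, not_le]
      exact hN
    obtain ⟨ℓ, u, hlt, hgt⟩ := geometric_hahn_banach_closed_point hBconv hBclosed hx'B
    have hu0 : 0 < u := by
      have := hlt 0 hB0
      simpa using this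
    set f : Fin n → ℝ := fun k => ℓ (Pi.single k 1) / u with hfdef
    have hlx : ∀ x : Fin n → ℝ, ∑ k, f k * x k = ℓ x / u := by
      intro x
      have hx : x = ∑ k, Pi.single k (x k) := by
        funext m
        rw [Finset.sum_apply]
        simp [Pi.single_apply]
      conv_rhs => rw [hx]
      rw [map_sum, Finset.sum_div]
      refine Finset.sum_congr rfl fun k _ => ?_
      rw [hsingle_smul k (x k), map_smul]
      simp only [hfdef, smul_eq_mul]
      ring
    have hfD : f ∈ D := by
      intro y hy
      have h1 : ℓ y < u := hlt y hy
      have h2 : ℓ (-y) < u := hlt (-y) (hBneg y hy)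
      rw [map_neg] at h2
      rw [hlx y, abs_div, abs_of_pos hu0, div_le_one hu0, abs_le]
      constructor <;> linarith
    have hfx' : 1 < f i + f j := by
      have h1 : ∑ k, f k * x' k = ℓ x' / u := hlx x'
      have h2 : ∑ k, f k * x' k = f i + f j := by
        have : ∀ k : Fin n, f k * x' k
            = f k * (Pi.single i 1 : Fin n → ℝ) k
              + f k * (Pi.single j 1 : Fin n → ℝ) k := by
          intro k
          rw [hx'def]
          simp [mul_add]
        rw [Finset.sum_congr rfl fun k _ => this k, Finset.sum_add_distrib,
          hpair_single, hpair_single]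
      rw [h2] at h1
      rw [h1]
      exact (one_lt_div hu0).mpr hgt
    by_contra hcon
    push_neg at hcon
    have hkm := km_sublevel hDcomp hDconv
      (g := fun e : Fin n → ℝ => e i + e j)
      ((continuous_apply i).add (continuous_apply j))
      (by
        intro x y a b ha hb hab
        apply le_of_eq
        simp only [Pi.add_apply, Pi.smul_apply, smul_eq_mul]
        ring)
      hcon
    exact absurd (hkm f hfD) (not_le.mpr hfx')
  -- extreme points of B have clique-ℓ¹ mass at most 1
  have hkey : ∀ v ∈ Set.extremePoints ℝ B, ∑ j ∈ τ, |v j| ≤ 1 := by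
    intro v hv
    have hvB : v ∈ B := hv.1
    by_cases hex : ∃ j0 ∈ τ, v j0 ≠ 0
    · obtain ⟨j0, hj0, hvj0⟩ := hex
      have hz : ∀ j ∈ τ, j ≠ j0 → v j = 0 := by
        intro j hj hne
        by_contra hvj
        obtain ⟨e, he, hegt⟩ := hadj j0 j (Ne.symm hne)
          (hclique j0 hj0 j hj (Ne.symm hne))
        have heD : e ∈ D := he.1
        have hej0 : 0 < e j0 := by
          have := hDcoord e heD j
          have := abs_le.mp (hDcoord e heD j)
          linarith
        have hej : 0 < e j := by
          have := abs_le.mp (hDcoord e heD j0)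
          linarith
        exact hconc e he v hv j0 j (Ne.symm hne)
          (mul_ne_zero (ne_of_gt hej0) hvj0) (mul_ne_zero (ne_of_gt hej) hvj)
      have hsum0 : ∑ j ∈ τ, |v j| = |v j0| := by
        rw [Finset.sum_eq_single j0]
        · intro j hj hne
          rw [hz j hj hne, abs_zero]
        · intro h
          exact absurd hj0 h
      rw [hsum0]
      exact (hcoord v j0).trans hvB
    · push_neg at hex
      have : ∑ j ∈ τ, |v j| = 0 :=
        Finset.sum_eq_zero fun j hj => by rw [hex j hj, abs_zero]
      rw [this]
      exact zero_le_one
  -- hence the clique-ℓ¹ mass is dominated by the norm everywhere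
  have hB1 : ∀ w ∈ B, ∑ j ∈ τ, |w j| ≤ 1 := by
    refine km_sublevel hBcomp hBconv ?_ ?_ hkey
    · exact continuous_finset_sum _ fun j _ => (continuous_apply j).abs
    · intro x y a b ha hb hab
      rw [Finset.mul_sum, Finset.mul_sum, ← Finset.sum_add_distrib]
      refine Finset.sum_le_sum fun j _ => ?_
      calc |(a • x + b • y) j| = |a * x j + b * y j| := by
            simp [Pi.add_apply, Pi.smul_apply]
        _ ≤ |a * x j| + |b * y j| := abs_add_le _ _
        _ = a * |x j| + b * |y j| := by
            rw [abs_mul, abs_mul, abs_of_nonneg ha, abs_of_nonneg hb]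
  have hlow : ∀ x : Fin n → ℝ, ∑ j ∈ τ, |x j| ≤ N x := by
    intro x
    rcases eq_or_lt_of_le (hnonneg x) with h | h
    · have hx0 : x = 0 := hdef x h.symm
      subst hx0
      simp [h0]
    · have hw : N ((N x)⁻¹ • x) ≤ 1 := by
        rw [hsmul, abs_of_pos (inv_pos.mpr h), inv_mul_cancel₀ (ne_of_gt h)]
      have h1 := hB1 _ hw
      have h2 : ∑ j ∈ τ, |((N x)⁻¹ • x) j| = (N x)⁻¹ * ∑ j ∈ τ, |x j| := by
        rw [Finset.mul_sum]
        refine Finset.sum_congr rfl fun j _ => ?_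
        simp [Pi.smul_apply, abs_mul, abs_of_pos (inv_pos.mpr h)]
      rw [h2] at h1
      calc ∑ j ∈ τ, |x j| = N x * ((N x)⁻¹ * ∑ j ∈ τ, |x j|) := by
            field_simp
        _ ≤ N x * 1 := mul_le_mul_of_nonneg_left h1 (le_of_lt h)
        _ = N x := mul_one _
  -- conclusion
  intro a
  have hx : (fun i => if i ∈ τ then a i else 0) = ∑ j ∈ τ, Pi.single j (a j) := by
    funext m
    rw [Finset.sum_apply]
    by_cases hm : m ∈ τ <;> simp [Pi.single_apply, Finset.sum_ite_eq' τ, hm]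
  have hup : N (fun i => if i ∈ τ then a i else 0) ≤ ∑ j ∈ τ, |a j| := by
    rw [hx]
    refine (hsum τ _).trans (le_of_eq ?_)
    exact Finset.sum_congr rfl fun j _ => hsingle j (a j)
  have hdown : ∑ j ∈ τ, |a j| ≤ N (fun i => if i ∈ τ then a i else 0) := by
    have h1 := hlow (fun i => if i ∈ τ then a i else 0)
    have h2 : ∑ j ∈ τ, |if j ∈ τ then a j else 0| = ∑ j ∈ τ, |a j| :=
      Finset.sum_congr rfl fun j hj => by rw [if_pos hj]
    rwa [h2] at h1
  linarith
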